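/- Let R be a discrete valuation ring with uniformizer π. Let f ∈ R[X] be monic of degree M, and g_(1),...,g_(n) ∈ R[X] monic of degree ≥ 1 with Res(g_(1),...,g_(n)) ≠ 0, t := val_π(Res(g_(1),...,g_(n))), and s ≥ 2t+1 with f(X) ≡ ∏_{k} g_(k)(X) mod π^s. Then there exist monic polynomials g̃_(1),...,g̃_(n) ∈ R[X] with g̃_(k) ≡ g_(k) mod π^{s−t} for all k and f(X) ≡ ∏_k g̃_(k)(X) mod π^{2(s−t)}. Moreover, val_π(Res(g̃_(1),...,g̃_(n))) = t for any such tuple. -/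

import Mathlib

open Polynomial Finset

/-- The global column position of an index in the block-structured resultant matrix. -/
def resPos {n : ℕ} {m : Fin n → ℕ} (q : (k : Fin n) × Fin (m k)) : ℕ :=
  (∑ j ∈ Finset.univ.filter (fun j => j < q.1), m j) + (q.2 : ℕ)

/-- The matrix `A(g_(1), …, g_(n))` whose block of `deg g_(k)` rows consists of the
successively shifted coefficient rows of `∏_{j ≠ k} g_(j)`. -/
noncomputable def resMatrix {R : Type*} [CommRing R] {n : ℕ} (g : Fin n → Polynomial R) :
    Matrix ((k : Fin n) × Fin ((g k).natDegree)) ((k : Fin n) × Fin ((g k).natDegree)) R :=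
  fun p q =>
    if (p.2 : ℕ) ≤ resPos q then
      (∏ j ∈ Finset.univ.erase p.1, g j).coeff (resPos q - (p.2 : ℕ))
    else 0

/-- The generalized resultant `Res(g_(1), …, g_(n)) = det A(g_(1), …, g_(n))`. -/
noncomputable def genRes {R : Type*} [CommRing R] {n : ℕ} (g : Fin n → Polynomial R) : R :=
  (resMatrix g).det


lemma natDegree_eq_of_C_dvd_sub {R : Type*} [CommRing R] {p q : R[X]}
    (hp : p.Monic) (hq : q.Monic) {a : R} (ha : ¬ IsUnit a)
    (h : C a ∣ p - q) : p.natDegree = q.natDegree := by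
  obtain ⟨w, hw⟩ := h
  have key : ∀ N, a ∣ (p - q).coeff N := fun N => ⟨w.coeff N, by rw [hw, coeff_C_mul]⟩
  by_contra hne
  rcases lt_or_gt_of_ne hne with hlt | hlt
  · have h1 := key q.natDegree
    rw [coeff_sub, coeff_eq_zero_of_natDegree_lt hlt, hq.coeff_natDegree, zero_sub,
      dvd_neg] at h1
    exact ha (isUnit_of_dvd_one h1)
  · have h1 := key p.natDegree
    rw [coeff_sub, coeff_eq_zero_of_natDegree_lt hlt, hp.coeff_natDegree, sub_zero] at h1
    exact ha (isUnit_of_dvd_one h1)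

lemma prod_add_eps {R : Type*} [CommRing R] {ι : Type*} [DecidableEq ι]
    (ε : R) (s : Finset ι) (a b : ι → R) :
    ∃ x, ∏ i ∈ s, (a i + ε * b i)
      = ∏ i ∈ s, a i + ε * ∑ i ∈ s, b i * ∏ j ∈ s.erase i, a j + ε ^ 2 * x := by
  induction s using Finset.induction_on with
  | empty => exact ⟨0, by simp⟩
  | @insert i s hi ih =>
    obtain ⟨x, hx⟩ := ih
    have hsum : ∑ j ∈ insert i s, b j * ∏ k ∈ (insert i s).erase j, a k
        = b i * ∏ j ∈ s, a j + a i * ∑ j ∈ s, b j * ∏ k ∈ s.erase j, a k := by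
      rw [Finset.sum_insert hi, Finset.erase_insert hi, Finset.mul_sum]
      congr 1
      refine Finset.sum_congr rfl fun j hj => ?_
      rw [Finset.erase_insert_of_ne (by rintro rfl; exact hi hj),
        Finset.prod_insert (fun h => hi (Finset.mem_of_mem_erase h))]
      ring
    refine ⟨a i * x + b i * ∑ j ∈ s, b j * ∏ k ∈ s.erase j, a k + ε * (b i * x), ?_⟩
    rw [Finset.prod_insert hi, hx, Finset.prod_insert hi, hsum]
    ring

section resPosFacts

variable {n : ℕ} {m : Fin n → ℕ}

lemma resPos_block_le {k k' : Fin n} (hk : k < k') :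
    (∑ j ∈ Finset.univ.filter (fun j => j < k), m j) + m k
      ≤ ∑ j ∈ Finset.univ.filter (fun j => j < k'), m j := by
  have hsub : insert k (Finset.univ.filter (fun j => j < k))
      ⊆ Finset.univ.filter (fun j => j < k') := by
    intro j hj
    rcases Finset.mem_insert.mp hj with h | h
    · subst h; simp [hk]
    · simp only [Finset.mem_filter] at h ⊢
      exact ⟨Finset.mem_univ j, lt_trans h.2 hk⟩
  calc (∑ j ∈ Finset.univ.filter (fun j => j < k), m j) + m k
      = ∑ j ∈ insert k (Finset.univ.filter (fun j => j < k)), m j := by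
        rw [Finset.sum_insert (by simp)]; ring
    _ ≤ _ := Finset.sum_le_sum_of_subset hsub

lemma resPos_lt (q : (k : Fin n) × Fin (m k)) : resPos q < ∑ k, m k := by
  have h1 : (∑ j ∈ Finset.univ.filter (fun j => j < q.1), m j) + m q.1 ≤ ∑ k, m k := by
    calc (∑ j ∈ Finset.univ.filter (fun j => j < q.1), m j) + m q.1
        = ∑ j ∈ insert q.1 (Finset.univ.filter (fun j => j < q.1)), m j := by
          rw [Finset.sum_insert (by simp)]; ring
      _ ≤ _ := Finset.sum_le_sum_of_subset (Finset.subset_univ _)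
  have := q.2.isLt
  unfold resPos
  omega

lemma resPos_injective : Function.Injective (resPos (m := m)) := by
  rintro ⟨k, i⟩ ⟨k', i'⟩ hqq
  rcases lt_trichotomy k k' with hk | hk | hk
  · exfalso
    have h1 := resPos_block_le (m := m) hk
    have := i.isLt
    unfold resPos at hqq
    simp only at hqq
    omega
  · subst hk
    have : (i : ℕ) = (i' : ℕ) := by unfold resPos at hqq; simp only at hqq; omega
    simp [Fin.ext_iff, this]
  · exfalso
    have h1 := resPos_block_le (m := m) hk
    have := i'.isLt
    unfold resPos at hqq
    simp only at hqq
    omega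

lemma resPos_surj {r : ℕ} (hr : r < ∑ k, m k) : ∃ q : (k : Fin n) × Fin (m k), resPos q = r := by
  let F : ((k : Fin n) × Fin (m k)) → Fin (∑ k, m k) := fun q => ⟨resPos q, resPos_lt q⟩
  have hinj : Function.Injective F := fun p q h =>
    resPos_injective (by simpa [F, Fin.ext_iff] using h)
  have hbij : Function.Bijective F := by
    rw [Fintype.bijective_iff_injective_and_card]
    exact ⟨hinj, by simp⟩
  obtain ⟨q, hq⟩ := hbij.2 ⟨r, hr⟩
  exact ⟨q, by simpa [F, Fin.ext_iff] using hq⟩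

end resPosFacts

/-- **One Hensel lifting step (general case):** if `f ≡ ∏_k g_(k) mod π^s` with
`s ≥ 2t + 1`, `t = val_π(Res(g_(1), …, g_(n)))`, then there is an admissible lift
`(g̃_(k))_k`: monic polynomials with `g̃_(k) ≡ g_(k) mod π^{s−t}` and
`f ≡ ∏_k g̃_(k) mod π^{2(s−t)}`; moreover every admissible lift has
`val_π(Res(g̃_(1), …, g̃_(n))) = t`. -/
theorem hensel_step_general
    {R : Type*} [CommRing R] [IsDomain R] [IsDiscreteValuationRing R]
    (π : R) (hπ : Irreducible π)
    (f : Polynomial R) (hf : f.Monic)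
    {n : ℕ} (g : Fin n → Polynomial R)
    (hmonic : ∀ k, (g k).Monic) (hdeg : ∀ k, 1 ≤ (g k).natDegree)
    (hres : genRes g ≠ 0)
    (t : ℕ) (ht : π ^ t ∣ genRes g ∧ ¬ π ^ (t + 1) ∣ genRes g)
    (s : ℕ) (hs : 2 * t + 1 ≤ s)
    (hcongr : C (π ^ s) ∣ (f - ∏ k, g k)) :
    (∃ g' : Fin n → Polynomial R, (∀ k, (g' k).Monic) ∧
        (∀ k, C (π ^ (s - t)) ∣ (g' k - g k)) ∧
        C (π ^ (2 * (s - t))) ∣ (f - ∏ k, g' k)) ∧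
    (∀ g' : Fin n → Polynomial R, (∀ k, (g' k).Monic) →
        (∀ k, C (π ^ (s - t)) ∣ (g' k - g k)) →
        C (π ^ (2 * (s - t))) ∣ (f - ∏ k, g' k) →
        π ^ t ∣ genRes g' ∧ ¬ π ^ (t + 1) ∣ genRes g') := by
  classical
  have hπ0 : π ≠ 0 := hπ.ne_zero
  have hnonunit : ∀ m : ℕ, 1 ≤ m → ¬ IsUnit (π ^ m) := fun m hm hu =>
    hπ.not_isUnit (isUnit_of_dvd_unit (dvd_pow_self π (Nat.one_le_iff_ne_zero.mp hm)) hu)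
  set M : ℕ := ∑ k, (g k).natDegree with hMdef
  -- degrees
  have hPmonic : (∏ k, g k).Monic := monic_prod_of_monic _ _ fun k _ => hmonic k
  have hPdeg : (∏ k, g k).natDegree = M := natDegree_prod_of_monic _ _ fun k _ => hmonic k
  have hfdeg : f.natDegree = M := by
    rw [natDegree_eq_of_C_dvd_sub hf hPmonic (hnonunit s (by omega)) hcongr, hPdeg]
  -- unit decomposition of the resultant
  obtain ⟨u0, hu0⟩ := ht.1
  have hu0unit : IsUnit u0 := by
    by_contra hnu
    have hmem : u0 ∈ IsLocalRing.maximalIdeal R := hnu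
    rw [hπ.maximalIdeal_eq, Ideal.mem_span_singleton] at hmem
    obtain ⟨v, hv⟩ := hmem
    exact ht.2 ⟨v, by rw [hu0, hv]; ring⟩
  obtain ⟨u, hu⟩ := hu0unit
  -- the defect polynomial d
  obtain ⟨d, hd⟩ := hcongr
  have hdcoeff : ∀ r, M ≤ r → d.coeff r = 0 := by
    intro r hr
    have h1 : (f - ∏ k, g k).coeff r = 0 := by
      rw [coeff_sub]
      rcases eq_or_lt_of_le hr with he | hlt
      · have h2 : f.coeff r = 1 := by rw [← he, ← hfdeg]; exact hf.coeff_natDegree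
        have h3 : (∏ k, g k).coeff r = 1 := by rw [← he, ← hPdeg]; exact hPmonic.coeff_natDegree
        rw [h2, h3, sub_self]
      · rw [coeff_eq_zero_of_natDegree_lt (by omega),
          coeff_eq_zero_of_natDegree_lt (by omega), sub_self]
    rw [hd, coeff_C_mul] at h1
    exact (mul_eq_zero.mp h1).resolve_left (pow_ne_zero s hπ0)
  -- solve the linear system
  set A := resMatrix g with hA
  set c : ((k : Fin n) × Fin ((g k).natDegree)) → R := fun q => d.coeff (resPos q) with hc
  set h : ((k : Fin n) × Fin ((g k).natDegree)) → R :=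
    fun p => (↑u⁻¹ : R) * ((A.transpose.adjugate.mulVec c) p) with hh
  have hsolve : ∀ q, (A.transpose.mulVec h) q = π ^ t * c q := by
    have h1 : A.transpose.mulVec (A.transpose.adjugate.mulVec c) = (π ^ t * u0) • c := by
      rw [Matrix.mulVec_mulVec, Matrix.mul_adjugate, Matrix.det_transpose,
        Matrix.smul_mulVec, Matrix.one_mulVec]
      rw [show A.det = genRes g from rfl, hu0]
    intro q
    have h2 : h = (↑u⁻¹ : R) • (A.transpose.adjugate.mulVec c) := rfl
    rw [h2, Matrix.mulVec_smul, h1]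
    show (↑u⁻¹ : R) * ((π ^ t * u0) * c q) = π ^ t * c q
    rw [← hu]
    calc (↑u⁻¹ : R) * ((π ^ t * ↑u) * c q) = π ^ t * c q * ((↑u⁻¹ : R) * ↑u) := by ring
      _ = π ^ t * c q := by rw [Units.inv_mul, mul_one]
  -- the correction polynomials
  set G : Fin n → R[X] := fun k => ∏ j ∈ Finset.univ.erase k, g j with hG
  set H : Fin n → R[X] :=
    fun k => ∑ i ∈ (Finset.univ : Finset (Fin ((g k).natDegree))), C (h ⟨k, i⟩) * X ^ (i : ℕ)
    with hH
  have hHdeg : ∀ k, (H k).natDegree < (g k).natDegree := by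
    intro k
    have h1 : (H k).natDegree ≤ (g k).natDegree - 1 := by
      apply natDegree_sum_le_of_forall_le
      intro i _
      calc (C (h ⟨k, i⟩) * X ^ (i : ℕ)).natDegree ≤ (X ^ (i : ℕ) : R[X]).natDegree :=
            natDegree_C_mul_le _ _
        _ = (i : ℕ) := natDegree_X_pow _
        _ ≤ (g k).natDegree - 1 := by have := i.isLt; omega
    have := hdeg k
    omega
  have hGdeg : ∀ k, (G k).natDegree = M - (g k).natDegree := by
    intro k
    have h1 : (G k).natDegree = ∑ j ∈ Finset.univ.erase k, (g j).natDegree :=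
      natDegree_prod_of_monic _ _ fun j _ => hmonic j
    have h2 : (∑ j ∈ Finset.univ.erase k, (g j).natDegree) + (g k).natDegree = M :=
      Finset.sum_erase_add _ _ (Finset.mem_univ k)
    omega
  -- the key identity
  have hkey : ∑ k, H k * G k = C (π ^ t) * d := by
    ext r
    rw [finset_sum_coeff, coeff_C_mul]
    by_cases hr : r < M
    · obtain ⟨q, hq⟩ := resPos_surj (m := fun k => (g k).natDegree) hr
      have hLHS : ∀ k, (H k * G k).coeff r
          = ∑ i ∈ (Finset.univ : Finset (Fin ((g k).natDegree))),
              h ⟨k, i⟩ * (if (i : ℕ) ≤ r then (G k).coeff (r - (i : ℕ)) else 0) := by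
        intro k
        rw [hH]
        simp only
        rw [Finset.sum_mul, finset_sum_coeff]
        refine Finset.sum_congr rfl fun i _ => ?_
        rw [show C (h ⟨k, i⟩) * X ^ (i : ℕ) * G k = C (h ⟨k, i⟩) * (G k * X ^ (i : ℕ)) by ring,
          coeff_C_mul, coeff_mul_X_pow']
      have hmv : (A.transpose.mulVec h) q = ∑ k, ∑ i ∈ (Finset.univ : Finset (Fin ((g k).natDegree))),
          h ⟨k, i⟩ * (if (i : ℕ) ≤ r then (G k).coeff (r - (i : ℕ)) else 0) := by
        rw [Matrix.mulVec]
        show ∑ p, A.transpose q p * h p = _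
        rw [← Finset.univ_sigma_univ, Finset.sum_sigma]
        refine Finset.sum_congr rfl fun k _ => Finset.sum_congr rfl fun i _ => ?_
        rw [Matrix.transpose_apply]
        show A ⟨k, i⟩ q * h ⟨k, i⟩ = _
        rw [hA, resMatrix]
        simp only
        rw [← hq]
        ring
      calc ∑ k, (H k * G k).coeff r = (A.transpose.mulVec h) q := by
            rw [hmv]; exact Finset.sum_congr rfl fun k _ => hLHS k
        _ = π ^ t * c q := hsolve q
        _ = π ^ t * d.coeff r := by rw [hc]; simp only; rw [hq]
    · have hRHS : d.coeff r = 0 := hdcoeff r (by omega)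
      rw [hRHS, mul_zero]
      refine Finset.sum_eq_zero fun k _ => ?_
      apply coeff_eq_zero_of_natDegree_lt
      calc (H k * G k).natDegree ≤ (H k).natDegree + (G k).natDegree := natDegree_mul_le
        _ < (g k).natDegree + (M - (g k).natDegree) := by
            have := hHdeg k; have := hGdeg k; omega
        _ ≤ M := by
            have h2 : (∑ j ∈ Finset.univ.erase k, (g j).natDegree) + (g k).natDegree = M :=
              Finset.sum_erase_add _ _ (Finset.mem_univ k)
            omega
        _ ≤ r := by omega
  -- the lift
  set ε : R := π ^ (s - t) with hε
  set g' : Fin n → R[X] := fun k => g k + C ε * H k with hg'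
  constructor
  · refine ⟨g', fun k => ?_, fun k => ⟨H k, by rw [hg']; ring⟩, ?_⟩
    · apply (hmonic k).add_of_left
      apply degree_lt_degree
      exact lt_of_le_of_lt (natDegree_C_mul_le _ _) (hHdeg k)
    · obtain ⟨x, hx⟩ := prod_add_eps (C ε) Finset.univ g H
      have hCs : C ε * C (π ^ t) = C (π ^ s) := by
        rw [← C_mul, hε, ← pow_add]
        congr 2
        omega
      have hC2 : (C ε) ^ 2 = C (π ^ (2 * (s - t))) := by
        rw [← C_pow, hε, ← pow_mul, Nat.mul_comm]
      refine ⟨-x, ?_⟩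
      have hx' : ∏ i, (g i + C ε * H i)
          = ∏ i, g i + C ε * ∑ i, H i * G i + C ε ^ 2 * x := hx
      rw [hg']
      simp only
      rw [hx', hkey]
      linear_combination hd - d * hCs - x * hC2
  · intro g' hm' hc' _
    have hdeg' : ∀ k, (g' k).natDegree = (g k).natDegree := fun k =>
      natDegree_eq_of_C_dvd_sub (hm' k) (hmonic k) (hnonunit _ (by omega)) (hc' k)
    set Iq := Ideal.span {π ^ (s - t)} with hIq
    set φ := Ideal.Quotient.mk Iq with hφ
    have hφ0 : φ (π ^ (s - t)) = 0 :=
      Ideal.Quotient.eq_zero_iff_mem.mpr (Ideal.subset_span rfl)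
    have hmapg : ∀ k, (g' k).map φ = (g k).map φ := by
      intro k
      obtain ⟨w, hw⟩ := hc' k
      have h0 : ((g' k) - (g k)).map φ = 0 := by
        rw [hw, Polynomial.map_mul, Polynomial.map_C, hφ0, Polynomial.C_0, zero_mul]
      rwa [Polynomial.map_sub, sub_eq_zero] at h0
    let e : ((k : Fin n) × Fin ((g k).natDegree)) ≃ ((k : Fin n) × Fin ((g' k).natDegree)) :=
      Equiv.sigmaCongrRight fun k => finCongr (hdeg' k).symm
    have hpos : ∀ q : (k : Fin n) × Fin ((g k).natDegree), resPos (e q) = resPos q := by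
      rintro ⟨k, i⟩
      unfold resPos
      simp only [e, Equiv.sigmaCongrRight_apply, Fin.coe_cast]
      congr 1
      exact Finset.sum_congr rfl fun j _ => hdeg' j
    have hdet : φ (genRes g') = φ (genRes g) := by
      have h1 : genRes g' = ((resMatrix g').submatrix e e).det :=
        (Matrix.det_submatrix_equiv_self e (resMatrix g')).symm
      rw [h1, genRes, RingHom.map_det, RingHom.map_det]
      congr 1
      ext p q
      rcases p with ⟨k, i⟩
      show φ (if (i : ℕ) ≤ resPos (e q) then
          (∏ j ∈ Finset.univ.erase k, g' j).coeff (resPos (e q) - (i : ℕ)) else 0)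
        = φ (if (i : ℕ) ≤ resPos q then
          (∏ j ∈ Finset.univ.erase k, g j).coeff (resPos q - (i : ℕ)) else 0)
      rw [hpos q, apply_ite φ, apply_ite φ]
      congr 1
      rw [← Polynomial.coeff_map, ← Polynomial.coeff_map]
      congr 1
      rw [Polynomial.map_prod, Polynomial.map_prod]
      exact Finset.prod_congr rfl fun j _ => hmapg j
    have hsub : π ^ (s - t) ∣ (genRes g' - genRes g) := by
      rw [← Ideal.mem_span_singleton, ← hIq]
      exact Ideal.Quotient.eq.mp hdet
    obtain ⟨y, hy⟩ := hsub
    have hgr' : genRes g' = genRes g + π ^ (s - t) * y := by rw [← hy]; ring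
    constructor
    · rw [hgr']
      exact dvd_add ht.1 (Dvd.dvd.mul_right (pow_dvd_pow π (by omega)) y)
    · intro hcon
      apply ht.2
      have hgr : genRes g = genRes g' - π ^ (s - t) * y := by rw [hgr']; ring
      rw [hgr]
      exact dvd_sub hcon ((pow_dvd_pow π (by omega : t + 1 ≤ s - t)).mul_right y)
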